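/- Let S be a finite nonempty index set and for each i ∈ S let κ_i : ℝ → Set(ℝ^d) be a nested convex family (each κ_i(λ) compact and convex, κ_i monotone, and κ_i(λ) = ⋂_{λ'>λ} κ_i(λ') for every λ). For nonempty T ⊆ S let λ(T) = inf{λ ∈ ℝ | ⋂_{i∈T} κ_i(λ) ≠ ∅} (assumed finite, i.e., this set is nonempty and bounded below for T = S) and let x(T) be the lexicographically least point of ⋂_{i∈T} κ_i(λ(T)). Then there exists a nonempty subset B ⊆ S with |B| ≤ 2d + 1 such that λ(B) = λ(S) and x(B) = x(S). In other words, every quasiconvex program in ℝ^d has a basis of at most 2d + 1 constraints determining its value. -/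

import Mathlib

open Module Finset

private lemma lexlt_iff {d : ℕ} (a b : Fin d → ℝ) :
    toLex a < toLex b ↔ ∃ i, (∀ j, j < i → a j = b j) ∧ a i < b i := Iff.rfl

/-- The open lower cone of the lexicographic order on `ℝ^d` is convex. -/
private lemma lex_le_of_not_lt {d : ℕ} {a b : Fin d → ℝ} (h : ¬toLex b < toLex a) :
    toLex a ≤ toLex b := by
  have htri := (Pi.isTrichotomous_lex (β := fun _ : Fin d => ℝ) (· < ·)
      (@fun _ => ((· < ·) : ℝ → ℝ → Prop)) wellFounded_lt).trichotomous a b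
  by_cases h1 : toLex a < toLex b
  · exact Or.inr h1
  · exact Or.inl (congrArg toLex (htri h1 h))

/-- The open lower cone of the lexicographic order on `ℝ^d` is convex. -/
private lemma lex_cone_convex {d : ℕ} (x : Fin d → ℝ) :
    Convex ℝ {y : Fin d → ℝ | toLex y < toLex x} := by
  intro a ha b hb t s ht hs hts
  rcases eq_or_lt_of_le ht with h0 | htpos
  · have hs1 : s = 1 := by linarith
    simpa [← h0, hs1] using hb
  rcases eq_or_lt_of_le hs with h0 | hspos
  · have ht1 : t = 1 := by linarith
    simpa [← h0, ht1] using ha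
  obtain ⟨k, hk1, hk2⟩ := (lexlt_iff a x).1 ha
  obtain ⟨m, hm1, hm2⟩ := (lexlt_iff b x).1 hb
  have h1 : a (min k m) ≤ x (min k m) := by
    rcases lt_or_eq_of_le (min_le_left k m) with h | h
    · exact (hk1 _ h).le
    · rw [h]; exact hk2.le
  have h2 : b (min k m) ≤ x (min k m) := by
    rcases lt_or_eq_of_le (min_le_right k m) with h | h
    · exact (hm1 _ h).le
    · rw [h]; exact hm2.le
  have h3 : a (min k m) < x (min k m) ∨ b (min k m) < x (min k m) := by
    rcases le_total k m with h | h
    · left; rw [min_eq_left h]; exact hk2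
    · right; rw [min_eq_right h]; exact hm2
  refine (lexlt_iff _ x).2 ⟨min k m, fun j hj => ?_, ?_⟩
  · have hja : a j = x j := hk1 j (hj.trans_le (min_le_left k m))
    have hjb : b j = x j := hm1 j (hj.trans_le (min_le_right k m))
    have : (t • a + s • b) j = t * a j + s * b j := rfl
    rw [this, hja, hjb]
    linear_combination (x j) * hts
  · have heq : (t • a + s • b) (min k m) = t * a (min k m) + s * b (min k m) := rfl
    rw [heq]
    have hxx : t * x (min k m) + s * x (min k m) = x (min k m) := by
      linear_combination (x (min k m)) * hts
    rcases h3 with h | h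
    · have ha' := mul_lt_mul_of_pos_left h htpos
      have hb' := mul_le_mul_of_nonneg_left h2 hs
      linarith
    · have hb' := mul_lt_mul_of_pos_left h hspos
      have ha' := mul_le_mul_of_nonneg_left h1 ht
      linarith

/-- Every quasiconvex program in `ℝ^d` has a basis of at most `2d + 1` constraints determining
its value: there is a subfamily `B` of at most `2d + 1` of the nested convex families whose
program has the same optimal level `λ` and the same lexicographically least optimal point. -/
theorem quasiconvex_program_has_small_basis (d : ℕ) {ι : Type*} [Fintype ι] [Nonempty ι]
    (κ : ι → ℝ → Set (Fin d → ℝ))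
    (hcompact : ∀ i l, IsCompact (κ i l))
    (hconvex : ∀ i l, Convex ℝ (κ i l))
    (hmono : ∀ i, Monotone (κ i))
    (hrc : ∀ i l, κ i l = ⋂ l' ∈ Set.Ioi l, κ i l')
    (hne : {l : ℝ | (⋂ i, κ i l).Nonempty}.Nonempty)
    (hbdd : BddBelow {l : ℝ | (⋂ i, κ i l).Nonempty})
    (x : Fin d → ℝ)
    (hx : x ∈ ⋂ i, κ i (sInf {l : ℝ | (⋂ i, κ i l).Nonempty}))
    (hlex : ∀ y ∈ ⋂ i, κ i (sInf {l : ℝ | (⋂ i, κ i l).Nonempty}), toLex x ≤ toLex y) :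
    ∃ B : Finset ι, B.Nonempty ∧ B.card ≤ 2 * d + 1 ∧
      BddBelow {l : ℝ | (⋂ i ∈ B, κ i l).Nonempty} ∧
      sInf {l : ℝ | (⋂ i ∈ B, κ i l).Nonempty} = sInf {l : ℝ | (⋂ i, κ i l).Nonempty} ∧
      (x ∈ ⋂ i ∈ B, κ i (sInf {l : ℝ | (⋂ i ∈ B, κ i l).Nonempty})) ∧
      ∀ y ∈ ⋂ i ∈ B, κ i (sInf {l : ℝ | (⋂ i ∈ B, κ i l).Nonempty}), toLex x ≤ toLex y := by
  classical
  set lS := sInf {l : ℝ | (⋂ i, κ i l).Nonempty} with hlS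
  have hfr : finrank ℝ (Fin d → ℝ) = d := by simp
  have hxmem : ∀ i, x ∈ κ i lS := by simpa [Set.mem_iInter] using hx
  -- Step A: below the optimal level the full intersection is empty.
  have stepA : ∀ l, l < lS → ¬(⋂ i, κ i l).Nonempty := fun l hl hne' =>
    absurd (csInf_le hbdd hne') (not_le.mpr hl)
  -- Step B: a subfamily of at most `d+1` constraints already pins the level.
  obtain ⟨T, hTne, hTcard, hTempty⟩ : ∃ T : Finset ι, T.Nonempty ∧ T.card ≤ d + 1 ∧
      ∀ l, l < lS → ¬(⋂ i ∈ T, κ i l).Nonempty := by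
    by_contra hcon
    push_neg at hcon
    have hg : ∀ T : Finset ι, ∃ l, l < lS ∧
        (T.Nonempty → T.card ≤ d + 1 → (⋂ i ∈ T, κ i l).Nonempty) := by
      intro T
      by_cases h : T.Nonempty ∧ T.card ≤ d + 1
      · obtain ⟨l, hl, hl2⟩ := hcon T h.1 h.2
        exact ⟨l, hl, fun _ _ => hl2⟩
      · exact ⟨lS - 1, by linarith, fun h1 h2 => absurd ⟨h1, h2⟩ h⟩
    choose g hg1 hg2 using hg
    have huniv : (Finset.univ : Finset (Finset ι)).Nonempty := ⟨∅, mem_univ _⟩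
    set m := (Finset.univ : Finset (Finset ι)).sup' huniv g with hm
    have hmlt : m < lS := (Finset.sup'_lt_iff huniv).2 fun T _ => hg1 T
    have hinter : ∀ I : Finset ι, I ⊆ Finset.univ →
        I.card ≤ finrank ℝ (Fin d → ℝ) + 1 → (⋂ i ∈ I, κ i m).Nonempty := by
      intro I _ hcard
      rw [hfr] at hcard
      rcases I.eq_empty_or_nonempty with rfl | hI
      · simp
      · obtain ⟨y, hy⟩ := hg2 I hI hcard
        exact ⟨y, Set.mem_biInter fun i hi =>
          hmono i (Finset.le_sup' g (mem_univ I)) (Set.mem_iInter₂.1 hy i hi)⟩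
    have := Convex.helly_theorem' (𝕜 := ℝ) (F := fun i => κ i m)
      (s := Finset.univ) (fun i _ => hconvex i m) hinter
    have hfull : (⋂ i, κ i m).Nonempty := by
      obtain ⟨y, hy⟩ := this
      exact ⟨y, Set.mem_iInter.2 fun i => Set.mem_iInter₂.1 hy i (mem_univ i)⟩
    exact stepA m hmlt hfull
  -- Step C: a subfamily of at most `d` constraints pins the lexicographic minimum.
  obtain ⟨C, hCcard, hClex⟩ : ∃ C : Finset ι, C.card ≤ d ∧
      ∀ y ∈ ⋂ i ∈ C, κ i lS, toLex x ≤ toLex y := by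
    set F : Option ι → Set (Fin d → ℝ) :=
      fun o => Option.elim o {y : Fin d → ℝ | toLex y < toLex x} (fun i => κ i lS) with hF
    have hFconv : ∀ o, Convex ℝ (F o) := by
      rintro (_ | i)
      · exact lex_cone_convex x
      · exact hconvex i lS
    have hbad : ¬(⋂ o ∈ (Finset.univ : Finset (Option ι)), F o).Nonempty := by
      rintro ⟨y, hy⟩
      have hyD : toLex y < toLex x := Set.mem_iInter₂.1 hy none (mem_univ _)
      have hyk : ∀ i, y ∈ κ i lS := fun i => Set.mem_iInter₂.1 hy (some i) (mem_univ _)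
      exact absurd (hlex y (Set.mem_iInter.2 hyk)) fun hle =>
        lt_irrefl _ (lt_of_le_of_lt hle hyD)
    have hex : ∃ I : Finset (Option ι), I.card ≤ d + 1 ∧ ¬(⋂ o ∈ I, F o).Nonempty := by
      by_contra h
      push_neg at h
      exact hbad (Convex.helly_theorem' (𝕜 := ℝ) (fun o _ => hFconv o)
        (fun I _ hcard => h I (by rwa [hfr] at hcard)))
    obtain ⟨I, hIcard, hIempty⟩ := hex
    have hnone : none ∈ I := by
      by_contra hnone
      refine hIempty ⟨x, Set.mem_biInter fun o ho => ?_⟩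
      match o with
      | none => exact absurd ho hnone
      | some i => exact hxmem i
    refine ⟨Finset.univ.filter (fun i => some i ∈ I), ?_, ?_⟩
    · have hle : (Finset.univ.filter (fun i => some i ∈ I)).card ≤ (I.erase none).card := by
        apply Finset.card_le_card_of_injOn some
        · intro i hi
          exact Finset.mem_erase.2 ⟨Option.some_ne_none i, (Finset.mem_filter.1 hi).2⟩
        · exact fun a _ b _ h => Option.some_injective _ h
      rw [Finset.card_erase_of_mem hnone] at hle
      have hIpos : 1 ≤ I.card := Finset.card_pos.2 ⟨none, hnone⟩
      omega
    · intro y hy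
      by_contra hle
      replace hle : toLex y < toLex x := by
        by_contra hyx
        exact hle (lex_le_of_not_lt hyx)
      refine hIempty ⟨y, Set.mem_biInter fun o ho => ?_⟩
      match o with
      | none => exact hle
      | some i =>
        exact Set.mem_iInter₂.1 hy i (Finset.mem_filter.2 ⟨mem_univ i, ho⟩)
  -- Step D: conclude with `B = T ∪ C`.
  refine ⟨T ∪ C, hTne.mono Finset.subset_union_left, ?_, ?_, ?_, ?_, ?_⟩
  · calc (T ∪ C).card ≤ T.card + C.card := Finset.card_union_le T C
      _ ≤ 2 * d + 1 := by omega
  all_goals {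
    have hmemB : lS ∈ {l : ℝ | (⋂ i ∈ T ∪ C, κ i l).Nonempty} :=
      ⟨x, Set.mem_biInter fun i _ => hxmem i⟩
    have hlb : ∀ l ∈ {l : ℝ | (⋂ i ∈ T ∪ C, κ i l).Nonempty}, lS ≤ l := by
      intro l hl
      by_contra h
      rw [not_le] at h
      obtain ⟨y, hy⟩ := hl
      exact hTempty l h ⟨y, Set.mem_biInter fun i hi =>
        Set.mem_iInter₂.1 hy i (Finset.mem_union_left C hi)⟩
    have hbddB : BddBelow {l : ℝ | (⋂ i ∈ T ∪ C, κ i l).Nonempty} := ⟨lS, hlb⟩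
    have hsInfB : sInf {l : ℝ | (⋂ i ∈ T ∪ C, κ i l).Nonempty} = lS :=
      le_antisymm (csInf_le hbddB hmemB) (le_csInf ⟨lS, hmemB⟩ hlb)
    first
    | exact hbddB
    | exact hsInfB
    | (rw [hsInfB]; exact Set.mem_biInter fun i _ => hxmem i)
    | (rw [hsInfB]
       intro y hy
       exact hClex y (Set.mem_biInter fun i hi =>
         Set.mem_iInter₂.1 hy i (Finset.mem_union_right T hi))) }
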